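/- For positive natural numbers n and m, there exists an embedding of MV-algebras from Łₙ into Łₘ if and only if n divides m. -/

import Mathlib

/-- The carrier of the Łukasiewicz chain Łₙ : {k/n : k ∈ ℕ, 0 ≤ k ≤ n} ⊆ ℚ. -/
abbrev Luk (n : ℕ+) : Type := {x : ℚ // ∃ k : ℕ, k ≤ (n : ℕ) ∧ x = (k : ℚ) / (n : ℕ)}

/-- The constant 0 of Łₙ. -/
def lukZero (n : ℕ+) : Luk n := ⟨0, 0, Nat.zero_le _, by simp⟩

/-- The negation ¬x = 1 - x of Łₙ. -/
def lukNeg {n : ℕ+} (x : Luk n) : Luk n :=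
  ⟨1 - x.1, by
    obtain ⟨k, hk, hx⟩ := x.2
    refine ⟨(n : ℕ) - k, Nat.sub_le _ _, ?_⟩
    have hn : ((n : ℕ) : ℚ) ≠ 0 := by exact_mod_cast n.pos.ne'
    rw [hx, Nat.cast_sub hk, sub_div, div_self hn]⟩

/-- The truncated sum x ⊕ y = min 1 (x + y) of Łₙ. -/
def lukOplus {n : ℕ+} (x y : Luk n) : Luk n :=
  ⟨min 1 (x.1 + y.1), by
    obtain ⟨k, hk, hx⟩ := x.2
    obtain ⟨j, hj, hy⟩ := y.2
    refine ⟨min (n : ℕ) (k + j), min_le_left _ _, ?_⟩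
    have hn : (0 : ℚ) < ((n : ℕ) : ℚ) := by exact_mod_cast n.pos
    rw [hx, hy, ← add_div]
    rcases le_total (k + j) (n : ℕ) with h | h
    · rw [min_eq_right h, min_eq_right]
      · push_cast; ring_nf
      · rw [div_le_one hn]; exact_mod_cast h
    · rw [min_eq_left h, min_eq_left, div_self hn.ne']
      · rw [one_le_div hn]; exact_mod_cast h⟩

/-- Łₙ embeds into Łₘ if and only if n divides m. -/
theorem luk_embeds_iff_dvd (n m : ℕ+) :
    (∃ f : Luk n → Luk m, Function.Injective f ∧
        (∀ x y, f (lukOplus x y) = lukOplus (f x) (f y)) ∧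
        (∀ x, f (lukNeg x) = lukNeg (f x)) ∧
        f (lukZero n) = lukZero m) ↔ (n : ℕ) ∣ (m : ℕ) := by
  have hnQ : (0 : ℚ) < ((n : ℕ) : ℚ) := by exact_mod_cast n.pos
  have hmQ : (0 : ℚ) < ((m : ℕ) : ℚ) := by exact_mod_cast m.pos
  constructor
  · rintro ⟨f, hinj, hplus, hneg, hzero⟩
    -- the element k/n of Łₙ
    set e : ∀ k : ℕ, k ≤ (n : ℕ) → Luk n :=
      fun k hk => ⟨(k : ℚ) / (n : ℕ), k, hk, rfl⟩ with he
    obtain ⟨j, hj, hfj⟩ := (f (e 1 n.one_le)).2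
    -- key induction
    have key : ∀ k, ∀ hk : k ≤ (n : ℕ),
        (f (e k hk)).1 = min 1 ((k * j : ℚ) / (m : ℕ)) := by
      intro k
      induction k with
      | zero =>
        intro hk
        have : e 0 hk = lukZero n := by
          apply Subtype.ext; simp [he, lukZero]
        rw [this, hzero]
        simp [lukZero]
      | succ k ih =>
        intro hk
        have hk' : k ≤ (n : ℕ) := Nat.le_of_succ_le hk
        have hstep : e (k + 1) hk = lukOplus (e k hk') (e 1 n.one_le) := by
          apply Subtype.ext
          show ((k + 1 : ℕ) : ℚ) / (n : ℕ) = min 1 ((k : ℚ) / n + (1 : ℕ) / n)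
          rw [← add_div, eq_comm, min_eq_right]
          · push_cast; ring_nf
          · rw [div_le_one hnQ]; exact_mod_cast hk
        rw [hstep, hplus]
        show min 1 ((f (e k hk')).1 + (f (e 1 n.one_le)).1) = _
        rw [ih hk', hfj]
        rcases le_total ((k * j : ℚ) / (m : ℕ)) 1 with h | h
        · rw [min_eq_right h]
          congr 1
          rw [← add_div]
          push_cast; ring_nf
        · rw [min_eq_left h, min_eq_left, min_eq_left]
          · calc (1 : ℚ) ≤ (k * j : ℚ) / m := h
              _ ≤ ((k + 1 : ℕ) * j : ℚ) / m := by
                rw [div_le_div_iff_of_pos_right hmQ]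
                push_cast
                nlinarith [show (0:ℚ) ≤ (j:ℚ) from by positivity]
          · have hj0 : (0 : ℚ) ≤ (j : ℚ) / m := by positivity
            linarith
    -- now use the negation equation at 1/n
    have hne : lukNeg (e 1 n.one_le) = e ((n : ℕ) - 1) (Nat.sub_le _ _) := by
      apply Subtype.ext
      show 1 - ((1 : ℕ) : ℚ) / n = (((n : ℕ) - 1 : ℕ) : ℚ) / n
      rw [Nat.cast_sub n.pos, sub_div, div_self hnQ.ne']
    have h1 := hneg (e 1 n.one_le)
    rw [hne] at h1
    have h2 : min 1 ((((n : ℕ) - 1 : ℕ) * j : ℚ) / m) = 1 - (j : ℚ) / m := by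
      rw [← key _ (Nat.sub_le _ _), h1]
      show 1 - (f (e 1 n.one_le)).1 = _
      rw [hfj]
    have hlt : ((((n : ℕ) - 1 : ℕ) * j : ℚ) / m) ≤ 1 := by
      by_contra hcon
      push_neg at hcon
      rw [min_eq_left hcon.le] at h2
      have hj0 : (j : ℚ) = 0 := by
        have : (j : ℚ) / m = 0 := by linarith
        field_simp at this
        exact_mod_cast this
      rw [hj0] at hcon
      norm_num at hcon
    rw [min_eq_right hlt] at h2
    refine ⟨j, ?_⟩
    have : ((n : ℕ) : ℚ) * j = m := by
      have hsub : ((((n : ℕ) - 1 : ℕ)) : ℚ) = ((n : ℕ) : ℚ) - 1 :=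
        by rw [Nat.cast_sub n.pos]; norm_num
      rw [hsub] at h2
      field_simp at h2
      linarith
    exact_mod_cast this.symm
  · rintro ⟨c, hc⟩
    have hc0 : c ≠ 0 := by
      rintro rfl
      simp only [Nat.mul_zero] at hc
      exact m.pos.ne' hc
    refine ⟨fun x => ⟨x.1, ?_⟩, ?_, ?_, ?_, ?_⟩
    · obtain ⟨k, hk, hx⟩ := x.2
      refine ⟨k * c, by rw [hc]; exact Nat.mul_le_mul_right c hk, ?_⟩
      rw [hx, hc]
      push_cast
      rw [mul_comm (k:ℚ) c, mul_comm ((n:ℕ):ℚ) c, mul_div_mul_left]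
      exact_mod_cast hc0
    · intro a b hab
      have := congrArg Subtype.val hab
      exact Subtype.ext this
    · intro x y; rfl
    · intro x; rfl
    · rfl
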